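/- Let G be a finite simple graph in which every vertex has positive degree, and let i, j, k be three pairwise adjacent marked vertices with marked set M = {i,j,k}. Define l_{ij} = (deg(i)+deg(j)−deg(k))/2 − 1, l_{ik} = (deg(i)+deg(k)−deg(j))/2 − 1, l_{jk} = (deg(j)+deg(k)−deg(i))/2 − 1. Then the state φ defined by φ = −a·l_{ij} on both darts between i and j, φ = −a·l_{ik} on both darts between i and k, φ = −a·l_{jk} on both darts between j and k, and φ(e) = a on every other dart, is fixed by one step of the search algorithm: (S∘C∘Q)φ = φ. -/

import Mathlib

namespace GraphWalk

variable {V : Type*}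

/-- The flip-flop shift operator `S` on the darts of a simple graph:
`(Sψ)(e) = ψ(e.symm)`. -/
noncomputable def shift (G : SimpleGraph V) (ψ : G.Dart → ℂ) : G.Dart → ℂ :=
  fun e => ψ e.symm

/-- The Grover coin `C`:
`(Cψ)(e) = (2/deg(e.fst)) Σ_{e' : e'.fst = e.fst} ψ(e') − ψ(e)`. -/
noncomputable def coin [Fintype V] [DecidableEq V] (G : SimpleGraph V)
    [DecidableRel G.Adj] (ψ : G.Dart → ℂ) : G.Dart → ℂ :=
  fun e => (2 / (G.degree e.fst : ℂ)) *
      (∑ e' ∈ Finset.univ.filter (fun e' : G.Dart => e'.fst = e.fst), ψ e') - ψ e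

/-- The query `Q`, flipping the sign of all amplitudes at marked vertices. -/
noncomputable def query [DecidableEq V] (G : SimpleGraph V) (M : Finset V)
    (ψ : G.Dart → ℂ) : G.Dart → ℂ :=
  fun e => if e.fst ∈ M then -ψ e else ψ e

/-- One step of the search algorithm, `U' = S ∘ C ∘ Q`. -/
noncomputable def step [Fintype V] [DecidableEq V] (G : SimpleGraph V)
    [DecidableRel G.Adj] (M : Finset V) (ψ : G.Dart → ℂ) : G.Dart → ℂ :=
  shift G (coin G (query G M ψ))

/-- One step of the quantum walk without query, `U = S ∘ C`. -/
noncomputable def walk [Fintype V] [DecidableEq V] (G : SimpleGraph V)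
    [DecidableRel G.Adj] (ψ : G.Dart → ℂ) : G.Dart → ℂ :=
  shift G (coin G ψ)

end GraphWalk

/-- Sums over the fiber of darts with a given source equal sums over neighbors. -/
private lemma sum_dart_fiber {V : Type*} [Fintype V] [DecidableEq V] (G : SimpleGraph V)
    [DecidableRel G.Adj] (v : V) (P : V × V → ℂ) :
    ∑ e ∈ Finset.univ.filter (fun e : G.Dart => e.fst = v), P e.toProd
      = ∑ w ∈ G.neighborFinset v, P (v, w) := by
  rw [show Finset.univ.filter (fun e : G.Dart => e.fst = v) = _ from G.dart_fst_fiber v,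
    Finset.sum_image (fun x _ y _ h => G.dartOfNeighborSet_injective v h),
    show G.neighborFinset v = (G.neighborSet v).toFinset from rfl,
    ← Finset.sum_set_coe (f := fun w => P (v, w))]
  rfl

/-- At a vertex of a marked triangle, the stationary state sums to zero over the
outgoing darts. -/
private lemma tri_sum {V : Type*} [Fintype V] [DecidableEq V] (G : SimpleGraph V)
    [DecidableRel G.Adj] (x y z : V) (hxy : G.Adj x y) (hxz : G.Adj x z)
    (hyz : G.Adj y z) (a : ℂ) (f : V → ℂ)
    (hfy : f y = -a * (((G.degree x : ℂ) + G.degree y - G.degree z) / 2 - 1))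
    (hfz : f z = -a * (((G.degree x : ℂ) + G.degree z - G.degree y) / 2 - 1))
    (hother : ∀ w ∈ G.neighborFinset x, w ≠ y → w ≠ z → f w = a) :
    ∑ w ∈ G.neighborFinset x, f w = 0 := by
  have hy : y ∈ G.neighborFinset x := by simpa using hxy
  have hz : z ∈ (G.neighborFinset x).erase y := by
    simp [Finset.mem_erase, hxz, (hyz.symm.ne : z ≠ y)]
  rw [← Finset.add_sum_erase _ f hy, ← Finset.add_sum_erase _ f hz]
  have hrest : ∀ w ∈ ((G.neighborFinset x).erase y).erase z, f w = a := by
    intro w hw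
    rw [Finset.mem_erase, Finset.mem_erase] at hw
    exact hother w hw.2.2 hw.2.1 hw.1
  rw [Finset.sum_congr rfl hrest, Finset.sum_const]
  have h2 : 2 ≤ G.degree x := by
    have hsub : ({y, z} : Finset V) ⊆ G.neighborFinset x := by
      intro w hw
      rcases Finset.mem_insert.1 hw with rfl | hw
      · exact hy
      · rw [Finset.mem_singleton] at hw; subst hw
        simpa using hxz
    have hcard2 : ({y, z} : Finset V).card = 2 := by
      rw [Finset.card_insert_of_notMem (by simp [hyz.ne]), Finset.card_singleton]
    calc 2 = ({y, z} : Finset V).card := hcard2.symm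
      _ ≤ (G.neighborFinset x).card := Finset.card_le_card hsub
      _ = G.degree x := rfl
  have hcard : (((G.neighborFinset x).erase y).erase z).card = G.degree x - 2 := by
    rw [Finset.card_erase_of_mem hz, Finset.card_erase_of_mem hy]
    have : (G.neighborFinset x).card = G.degree x := rfl
    omega
  rw [hfy, hfz, hcard, nsmul_eq_mul, Nat.cast_sub h2]
  push_cast
  ring

set_option maxHeartbeats 2000000 in
/-- Let `i, j, k` be three pairwise adjacent marked vertices (a marked triangle) of a
finite simple graph in which every vertex has positive degree. With
`l_{ij} = (deg(i)+deg(j)−deg(k))/2 − 1` (and cyclically), the state equal to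
`-a·l_{ij}` on both darts between `i` and `j`, `-a·l_{ik}` on both darts between `i`
and `k`, `-a·l_{jk}` on both darts between `j` and `k`, and `a` on every other dart,
is fixed by one step of the search algorithm with marked set `{i, j, k}`. -/
theorem marked_triangle_stationary {V : Type*} [Fintype V] [DecidableEq V]
    (G : SimpleGraph V) [DecidableRel G.Adj] (hdeg : ∀ v : V, 0 < G.degree v)
    (i j k : V) (hij : G.Adj i j) (hik : G.Adj i k) (hjk : G.Adj j k) (a : ℂ) :
    GraphWalk.step G {i, j, k}
      (fun e =>
        if e.toProd = (i, j) ∨ e.toProd = (j, i) then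
          -a * (((G.degree i : ℂ) + (G.degree j : ℂ) - (G.degree k : ℂ)) / 2 - 1)
        else if e.toProd = (i, k) ∨ e.toProd = (k, i) then
          -a * (((G.degree i : ℂ) + (G.degree k : ℂ) - (G.degree j : ℂ)) / 2 - 1)
        else if e.toProd = (j, k) ∨ e.toProd = (k, j) then
          -a * (((G.degree j : ℂ) + (G.degree k : ℂ) - (G.degree i : ℂ)) / 2 - 1)
        else a)
    = fun e =>
        if e.toProd = (i, j) ∨ e.toProd = (j, i) then
          -a * (((G.degree i : ℂ) + (G.degree j : ℂ) - (G.degree k : ℂ)) / 2 - 1)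
        else if e.toProd = (i, k) ∨ e.toProd = (k, i) then
          -a * (((G.degree i : ℂ) + (G.degree k : ℂ) - (G.degree j : ℂ)) / 2 - 1)
        else if e.toProd = (j, k) ∨ e.toProd = (k, j) then
          -a * (((G.degree j : ℂ) + (G.degree k : ℂ) - (G.degree i : ℂ)) / 2 - 1)
        else a := by
  classical
  set P : V × V → ℂ := fun p =>
    if p = (i, j) ∨ p = (j, i) then
      -a * (((G.degree i : ℂ) + (G.degree j : ℂ) - (G.degree k : ℂ)) / 2 - 1)
    else if p = (i, k) ∨ p = (k, i) then
      -a * (((G.degree i : ℂ) + (G.degree k : ℂ) - (G.degree j : ℂ)) / 2 - 1)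
    else if p = (j, k) ∨ p = (k, j) then
      -a * (((G.degree j : ℂ) + (G.degree k : ℂ) - (G.degree i : ℂ)) / 2 - 1)
    else a with hP
  have hne_ij : i ≠ j := hij.ne
  have hne_ik : i ≠ k := hik.ne
  have hne_jk : j ≠ k := hjk.ne
  have key : ∀ x y u w : V,
      (((y, x) : V × V) = (u, w) ∨ ((y, x) : V × V) = (w, u)) ↔
        (((x, y) : V × V) = (u, w) ∨ ((x, y) : V × V) = (w, u)) := by
    intro x y u w
    simp only [Prod.mk.injEq]
    tauto
  have hPsymm : ∀ p : V × V, P p.swap = P p := by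
    rintro ⟨x, y⟩
    simp only [hP, Prod.swap_prod_mk, key]
  show (fun e : G.Dart => _) = fun e : G.Dart => P e.toProd
  funext e
  show GraphWalk.coin G (GraphWalk.query G {i, j, k} (fun d : G.Dart => P d.toProd)) e.symm
      = P e.toProd
  set v : V := e.symm.fst with hv
  have hdv : (G.degree v : ℂ) ≠ 0 := Nat.cast_ne_zero.2 (hdeg v).ne'
  by_cases hvM : v ∈ ({i, j, k} : Finset V)
  · -- marked case: the coin sum vanishes
    have hsum : ∑ w ∈ G.neighborFinset v, P (v, w) = 0 := by
      rcases Finset.mem_insert.1 hvM with rfl | hvM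
      · refine tri_sum G v j k hij hik hjk a (fun w => P (v, w)) ?_ ?_ ?_
        · simp [hP, Prod.ext_iff, hne_ij, hne_ik, hne_jk, Ne.symm hne_ij,
            Ne.symm hne_ik, Ne.symm hne_jk]
          try ring
          try tauto
        · simp [hP, Prod.ext_iff, hne_ij, hne_ik, hne_jk, Ne.symm hne_ij,
            Ne.symm hne_ik, Ne.symm hne_jk]
          try ring
          try tauto
        · intro w hw hwj hwk
          have hwv : w ≠ v := fun h => G.irrefl (h ▸ (SimpleGraph.mem_neighborFinset _ _ _).1 hw)
          simp [hP, Prod.ext_iff, hwj, hwk, hwv, hne_ij, hne_ik, hne_jk,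
            Ne.symm hne_ij, Ne.symm hne_ik, Ne.symm hne_jk]
      · rcases Finset.mem_insert.1 hvM with rfl | hvM
        · refine tri_sum G v i k hij.symm hjk hik a (fun w => P (v, w)) ?_ ?_ ?_
          · simp [hP, Prod.ext_iff, hne_ij, hne_ik, hne_jk, Ne.symm hne_ij,
              Ne.symm hne_ik, Ne.symm hne_jk]
            try ring
            try tauto
          · simp [hP, Prod.ext_iff, hne_ij, hne_ik, hne_jk, Ne.symm hne_ij,
              Ne.symm hne_ik, Ne.symm hne_jk]
            try ring
            try tauto
          · intro w hw hwi hwk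
            have hwv : w ≠ v := fun h => G.irrefl (h ▸ (SimpleGraph.mem_neighborFinset _ _ _).1 hw)
            simp [hP, Prod.ext_iff, hwi, hwk, hwv, hne_ij, hne_ik, hne_jk,
              Ne.symm hne_ij, Ne.symm hne_ik, Ne.symm hne_jk]
        · rw [Finset.mem_singleton] at hvM; subst hvM
          refine tri_sum G v i j hik.symm hjk.symm hij a (fun w => P (v, w)) ?_ ?_ ?_
          · simp [hP, Prod.ext_iff, hne_ij, hne_ik, hne_jk, Ne.symm hne_ij,
              Ne.symm hne_ik, Ne.symm hne_jk]
            try ring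
            try tauto
          · simp [hP, Prod.ext_iff, hne_ij, hne_ik, hne_jk, Ne.symm hne_ij,
              Ne.symm hne_ik, Ne.symm hne_jk]
            try ring
            try tauto
          · intro w hw hwi hwj
            have hwv : w ≠ v := fun h => G.irrefl (h ▸ (SimpleGraph.mem_neighborFinset _ _ _).1 hw)
            simp [hP, Prod.ext_iff, hwi, hwj, hwv, hne_ij, hne_ik, hne_jk,
              Ne.symm hne_ij, Ne.symm hne_ik, Ne.symm hne_jk]
    have hq : ∀ e' ∈ Finset.univ.filter (fun e' : G.Dart => e'.fst = v),
        GraphWalk.query G {i, j, k} (fun d : G.Dart => P d.toProd) e' = -P e'.toProd := by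
      intro e' he'
      have h1 : e'.fst = v := (Finset.mem_filter.1 he').2
      simp only [GraphWalk.query]
      rw [if_pos (by rw [h1]; exact hvM)]
    simp only [GraphWalk.coin]
    rw [Finset.sum_congr rfl hq, Finset.sum_neg_distrib, sum_dart_fiber G v P, hsum]
    simp only [GraphWalk.query]
    rw [if_pos (show e.symm.fst ∈ ({i, j, k} : Finset V) from hvM)]
    rw [show P e.symm.toProd = P e.toProd from by
      rw [show e.symm.toProd = e.toProd.swap from rfl, hPsymm]]
    ring
  · -- unmarked case
    have hPa : ∀ p : V × V, p.1 ∉ ({i, j, k} : Finset V) → P p = a := by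
      rintro ⟨x, y⟩ hx
      simp only [Finset.mem_insert, Finset.mem_singleton, not_or] at hx
      simp [hP, Prod.ext_iff, hx.1, hx.2.1, hx.2.2]
    have hPa' : ∀ p : V × V, p.2 ∉ ({i, j, k} : Finset V) → P p = a := by
      rintro ⟨x, y⟩ hy
      simp only [Finset.mem_insert, Finset.mem_singleton, not_or] at hy
      simp [hP, Prod.ext_iff, hy.1, hy.2.1, hy.2.2]
    have hq : ∀ e' ∈ Finset.univ.filter (fun e' : G.Dart => e'.fst = v),
        GraphWalk.query G {i, j, k} (fun d : G.Dart => P d.toProd) e' = a := by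
      intro e' he'
      have h1 : e'.fst = v := (Finset.mem_filter.1 he').2
      simp only [GraphWalk.query]
      rw [if_neg (by rw [h1]; exact hvM)]
      exact hPa e'.toProd (by rw [show e'.toProd.1 = e'.fst from rfl, h1]; exact hvM)
    simp only [GraphWalk.coin]
    rw [Finset.sum_congr rfl hq, Finset.sum_const, SimpleGraph.dart_fst_fiber_card_eq_degree]
    simp only [GraphWalk.query]
    rw [if_neg (show e.symm.fst ∉ ({i, j, k} : Finset V) from hvM)]
    rw [show P e.symm.toProd = a from hPa e.symm.toProd hvM]
    rw [show P e.toProd = a from hPa' e.toProd hvM]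
    rw [nsmul_eq_mul]
    field_simp
    try rw [show ((G.degree e.toProd.2 : ℕ) : ℂ) = ((G.degree v : ℕ) : ℂ) from rfl]
    try field_simp
    try ring
    rw [← hv, mul_inv_cancel_right₀ hdv]
    ring
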